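/- arXiv:1506.07634 — 2 statements merged into one kernel-verified Lean document; each statement's English description precedes it below -/
import Mathlib

section
/- Let γ = ℵ_β be a strong limit cardinal with cf(γ) = ℵ₀ such that 2^γ = γ^{+ω₁+1} = ℵ_{β+ω₁+1}. Then the cardinal γ^{+ω₁} = ℵ_{β+ω₁} satisfies cf(γ^{+ω₁}) = ℵ₁ and (γ^{+ω₁})^{ℵ₀} > γ^{+ω₁}. -/
open Cardinal

theorem two_power_le_power_aleph0 {γ : Cardinal} (hsl : γ.IsStrongLimit)
    (hcf : γ.ord.cof = ℵ₀) : 2 ^ γ ≤ γ ^ ℵ₀ := by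
  obtain ⟨ι, f, hf, hι⟩ := Ordinal.exists_lsub_cof γ.ord
  rw [hcf] at hι
  have hlt : ∀ i, (f i).card < γ := fun i => by
    rw [← Cardinal.lt_ord]
    exact hf ▸ Ordinal.lt_lsub f i
  -- γ ≤ iSup of cards
  have hsup : γ ≤ ⨆ i, (f i).card := by
    by_contra h
    push_neg at h
    have hd : (⨆ i, (f i).card) < γ := h
    have : γ.ord ≤ (Order.succ (⨆ i, (f i).card)).ord := by
      rw [← hf]
      refine Ordinal.lsub_le fun i => ?_
      rw [Cardinal.lt_ord]
      exact lt_of_le_of_lt (le_ciSup (Cardinal.bddAbove_range _) i) (Order.lt_succ _)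
    have h1 : γ ≤ Order.succ (⨆ i, (f i).card) := by
      rwa [Cardinal.ord_le_ord] at this
    exact absurd h1 (not_le.mpr (hsl.isSuccLimit.succ_lt hd))
  have hsum : γ ≤ Cardinal.sum fun i => (f i).card :=
    hsup.trans (Cardinal.iSup_le_sum _)
  calc 2 ^ γ ≤ 2 ^ Cardinal.sum fun i => (f i).card :=
        Cardinal.power_le_power_left two_ne_zero hsum
    _ = Cardinal.prod fun i => 2 ^ (f i).card := Cardinal.power_sum 2 _
    _ ≤ Cardinal.prod fun _ : ι => γ :=
        Cardinal.prod_le_prod _ _ fun i => (hsl.two_power_lt (hlt i)).le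
    _ = γ ^ #ι := Cardinal.prod_const' ι γ
    _ = γ ^ ℵ₀ := by rw [hι]

/-- Let `γ = ℵ_β` be a strong limit cardinal with `cf(γ) = ℵ₀` such that
`2^γ = γ^{+ω₁+1} = ℵ_{β+ω₁+1}`. Then `γ^{+ω₁} = ℵ_{β+ω₁}` satisfies
`cf(γ^{+ω₁}) = ℵ₁` and `(γ^{+ω₁})^{ℵ₀} > γ^{+ω₁}`. -/
theorem stmt0 (β : Ordinal)
    (hsl : (aleph β).IsStrongLimit)
    (hcf : (aleph β).ord.cof = ℵ₀)
    (h2 : 2 ^ aleph β = aleph (β + (aleph 1).ord + 1)) :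
    (aleph (β + (aleph 1).ord)).ord.cof = aleph 1 ∧
      aleph (β + (aleph 1).ord) < aleph (β + (aleph 1).ord) ^ ℵ₀ := by
  have hlim : Order.IsSuccLimit ((aleph 1).ord) := Cardinal.isSuccLimit_ord (aleph0_le_aleph 1)
  constructor
  · rw [Cardinal.ord_aleph (β + (aleph 1).ord), Ordinal.cof_omega (Ordinal.isSuccLimit_add β hlim),
      Ordinal.cof_add β hlim.pos.ne', Cardinal.isRegular_aleph_one.cof_eq]
  · calc aleph (β + (aleph 1).ord) < aleph (β + (aleph 1).ord + 1) :=
          aleph_lt_aleph.mpr (Order.lt_succ _)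
      _ = 2 ^ aleph β := h2.symm
      _ ≤ aleph β ^ ℵ₀ := two_power_le_power_aleph0 hsl hcf
      _ ≤ aleph (β + (aleph 1).ord) ^ ℵ₀ :=
          Cardinal.power_le_power_right (aleph_le_aleph.mpr (le_self_add))
end

section
/- Let λ be an infinite cardinal and let δ = ℵ_β be a strong limit cardinal with λ < δ, cf(δ) ≤ λ, and 2^δ = ℵ_{β+ord(λ⁺)+1}. Then the cardinal δ^{+λ⁺} = ℵ_{β+ord(λ⁺)} satisfies cf(δ^{+λ⁺}) = λ⁺ and (δ^{+λ⁺})^λ > δ^{+λ⁺}. -/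
open Cardinal

-- Auxiliary: for a strong limit cardinal `δ` with `cf(δ.ord) ≤ l`, we have `2 ^ δ ≤ δ ^ l`.
theorem aux_two_power_le {δ l : Cardinal} (hsl : δ.IsStrongLimit)
    (hcf : δ.ord.cof ≤ l) : 2 ^ δ ≤ δ ^ l := by
  obtain ⟨ι, f, hf, hι⟩ := Ordinal.exists_lsub_cof δ.ord
  set g : ι → Cardinal := fun i => (f i).card with hg
  have hδ : ℵ₀ ≤ δ := hsl.aleph0_le
  have hgi : ∀ i, g i < δ := fun i => by
    have : f i < δ.ord := hf ▸ Ordinal.lt_lsub f i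
    exact Cardinal.lt_ord.1 this
  -- δ ≤ iSup g
  have hsup : δ ≤ iSup g := by
    by_contra h
    push_neg at h
    have hlt : Order.succ (iSup g) < δ := hsl.isSuccLimit.succ_lt h
    have : (Order.succ (iSup g)).ord < δ.ord := Cardinal.ord_lt_ord.2 hlt
    rw [← hf, Ordinal.lt_lsub_iff] at this
    obtain ⟨i, hi⟩ := this
    have : Order.succ (iSup g) ≤ g i := by
      simpa using Ordinal.card_le_card hi
    exact (Order.lt_succ (iSup g)).not_ge
      (this.trans (le_ciSup (Cardinal.bddAbove_range _) i))
  have hsum : δ ≤ Cardinal.sum g := hsup.trans (Cardinal.iSup_le_sum g)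
  calc 2 ^ δ ≤ 2 ^ Cardinal.sum g :=
        Cardinal.power_le_power_left two_ne_zero hsum
    _ = Cardinal.prod (fun i => 2 ^ g i) := Cardinal.power_sum 2 g
    _ ≤ Cardinal.prod (fun _ : ι => δ) :=
        Cardinal.prod_le_prod _ _ fun i => (hsl.two_power_lt (hgi i)).le
    _ = δ ^ #ι := Cardinal.prod_const' ι δ
    _ ≤ δ ^ l := Cardinal.power_le_power_left hsl.ne_zero (hι ▸ hcf)

/-- Let `λ` be an infinite cardinal and let `δ = ℵ_β` be a strong limit cardinal
with `λ < δ`, `cf(δ) ≤ λ`, and `2^δ = ℵ_{β+ord(λ⁺)+1}`. Then the cardinal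
`δ^{+λ⁺} = ℵ_{β+ord(λ⁺)}` satisfies `cf(δ^{+λ⁺}) = λ⁺` and `(δ^{+λ⁺})^λ > δ^{+λ⁺}`. -/
theorem stmt12 (l : Cardinal) (β : Ordinal)
    (hl : ℵ₀ ≤ l)
    (hsl : (aleph β).IsStrongLimit)
    (hlδ : l < aleph β)
    (hcf : (aleph β).ord.cof ≤ l)
    (h2 : 2 ^ aleph β = aleph (β + (Order.succ l).ord + 1)) :
    (aleph (β + (Order.succ l).ord)).ord.cof = Order.succ l ∧
      aleph (β + (Order.succ l).ord) < aleph (β + (Order.succ l).ord) ^ l := by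
  have hsucc : ℵ₀ ≤ Order.succ l := hl.trans (Order.le_succ l)
  have hordlim : Order.IsSuccLimit ((Order.succ l).ord) := Cardinal.isSuccLimit_ord hsucc
  constructor
  · rw [Cardinal.ord_aleph, Ordinal.cof_omega (Ordinal.isSuccLimit_add β hordlim),
      Ordinal.cof_add β hordlim.ne_bot]
    exact (Cardinal.isRegular_succ hl).cof_eq
  · calc aleph (β + (Order.succ l).ord)
        < aleph (β + (Order.succ l).ord + 1) := by
          rw [Ordinal.add_one_eq_succ]
          exact Cardinal.aleph_lt_aleph.2 (Order.lt_succ _)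
      _ = 2 ^ aleph β := h2.symm
      _ ≤ aleph β ^ l := aux_two_power_le hsl hcf
      _ ≤ aleph (β + (Order.succ l).ord) ^ l :=
          Cardinal.power_le_power_right
            (Cardinal.aleph_le_aleph.2 (le_self_add))
end
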